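/- Let |X| = n = ks + m with m > 0, V a vector space over F with basis e₁,...,e_{n-1}, e₀ = Σeᵢ, and p the frame representation p_a = span(Σ_{j∈a} e_j) (0∉a), p_a = p_{X∖a}. Let B = {a₁∪d,...,a_s∪d} be a block of CR(X,k,s) with a₁,...,a_s pairwise disjoint k-sets, d an m-set disjoint from all aᵢ. If char F does not divide s-1, then the s vectors representing p_{a₁∪d},...,p_{a_s∪d} are linearly independent, so the points span a projective subspace of dimension s-1 (not s-2). -/

import Mathlib

/-- The representing vector of the projective point `p_c`: for a subset `c` of
`X = {0,…,n-1}` it is `Σ_{j∈c} e j` when `0 ∉ c`, and (using `p_c = p_{X∖c}`)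
`Σ_{j∈cᶜ} e j` when `0 ∈ c`. -/
def pVec {V : Type*} [AddCommMonoid V] {n : ℕ} [NeZero n]
    (e : Fin n → V) (c : Finset (Fin n)) : V :=
  if (0 : Fin n) ∈ c then ∑ j ∈ cᶜ, e j else ∑ j ∈ c, e j

/-- Let `|X| = n = ks + m` with `m > 0`, and let `B = {a₁∪d,…,a_s∪d}` be a block of
`CR(X,k,s)` with `0 ∈ d`. If `char F ∤ (s-1)`, then the representing vectors of the
points `p_{a₁∪d},…,p_{a_s∪d}` are linearly independent, so these points span a
projective subspace of dimension `s-1` (vector dimension `s`), not `s-2`. -/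
theorem block_independent_of_char_not_dvd {F V : Type*} [Field F] [AddCommGroup V]
    [Module F V] (k s m n : ℕ) (hk : 0 < k) (hm : 0 < m) (hn : n = k * s + m) [NeZero n]
    (e : Fin n → V)
    (hli : LinearIndependent F (fun i : {i : Fin n // i ≠ 0} => e i.1))
    (h0 : e 0 = ∑ i ∈ Finset.univ.erase (0 : Fin n), e i)
    (a : Fin s → Finset (Fin n)) (d : Finset (Fin n))
    (hd : d.card = m) (h0d : (0 : Fin n) ∈ d)
    (hcard : ∀ i, (a i).card = k)
    (hdd : ∀ i, Disjoint (a i) d)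
    (hdisj : ∀ i j, i ≠ j → Disjoint (a i) (a j))
    (hchar : ((s - 1 : ℕ) : F) ≠ 0) :
    LinearIndependent F (fun i : Fin s => pVec e (a i ∪ d)) ∧
      Module.finrank F
          ↥(Submodule.span F (Set.range fun i : Fin s => pVec e (a i ∪ d))) = s := by
  classical
  have hs : 1 ≤ s := by
    by_contra h
    push_neg at h
    interval_cases s
    simp at hchar
  have h0a : ∀ j, (0 : Fin n) ∉ a j := by
    intro j hj
    exact (Finset.disjoint_left.mp (hdd j)) hj h0d
  set w : Fin s → V := fun j => ∑ t ∈ a j, e t with hw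
  -- complement of a i ∪ d is the union of the other a j
  have hcompl : ∀ i : Fin s, (a i ∪ d)ᶜ = (Finset.univ.erase i).biUnion a := by
    intro i
    have hsub : (Finset.univ.erase i).biUnion a ⊆ (a i ∪ d)ᶜ := by
      intro t ht
      rcases Finset.mem_biUnion.mp ht with ⟨j, hj, htj⟩
      have hji : j ≠ i := (Finset.mem_erase.mp hj).1
      rw [Finset.mem_compl, Finset.mem_union]
      push_neg
      constructor
      · exact Finset.disjoint_left.mp (hdisj j i hji) htj
      · exact Finset.disjoint_left.mp (hdd j) htj
    have hcardb : ((Finset.univ.erase i).biUnion a).card = (s - 1) * k := by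
      rw [Finset.card_biUnion (fun x _ y _ hxy => hdisj x y hxy)]
      rw [Finset.sum_congr rfl (fun j _ => hcard j), Finset.sum_const,
        Finset.card_erase_of_mem (Finset.mem_univ i), Finset.card_univ,
        Fintype.card_fin, smul_eq_mul]
    have hcardc : ((a i ∪ d)ᶜ).card = (s - 1) * k := by
      rw [Finset.card_compl, Fintype.card_fin,
        Finset.card_union_of_disjoint (hdd i), hcard i, hd]
      have h1 : (s - 1) * k + k = s * k := by
        rw [← Nat.succ_mul]
        congr 1
        omega
      have h2 : k * s = s * k := Nat.mul_comm k s
      omega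
    exact (Finset.eq_of_subset_of_card_le hsub (by omega)).symm
  -- the representing vector is S - w i
  have hv : ∀ i : Fin s, pVec e (a i ∪ d) = (∑ j, w j) - w i := by
    intro i
    have h0mem : (0 : Fin n) ∈ a i ∪ d := Finset.mem_union_right _ h0d
    rw [pVec, if_pos h0mem, hcompl i,
      Finset.sum_biUnion (fun x _ y _ hxy => hdisj x y hxy)]
    exact Finset.sum_erase_eq_sub (Finset.mem_univ i)
  -- the w j are linearly independent (as a statement about coefficients)
  have hwind : ∀ c : Fin s → F, ∑ j, c j • w j = 0 → ∀ j, c j = 0 := by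
    intro c hc j
    set g : Fin n → F := fun t => ∑ j', if t ∈ a j' then c j' else 0 with hg
    have hgj : ∀ j' : Fin s, ∀ t ∈ a j', g t = c j' := by
      intro j' t ht
      rw [hg]
      simp only
      rw [Finset.sum_eq_single j']
      · rw [if_pos ht]
      · intro b _ hb
        rw [if_neg (Finset.disjoint_left.mp (hdisj b j' hb) · ht)]
      · intro hb; exact absurd (Finset.mem_univ j') hb
    have hUsub : Finset.univ.biUnion a ⊆ Finset.univ.erase (0 : Fin n) := by
      intro t ht
      rcases Finset.mem_biUnion.mp ht with ⟨j', _, htj⟩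
      exact Finset.mem_erase.mpr ⟨fun h => h0a j' (h ▸ htj), Finset.mem_univ t⟩
    have hsum : ∑ t ∈ Finset.univ.erase (0 : Fin n), g t • e t = 0 := by
      rw [← Finset.sum_subset hUsub (by
        intro t _ htU
        have : g t = 0 := by
          rw [hg]
          apply Finset.sum_eq_zero
          intro j' _
          rw [if_neg (fun h => htU (Finset.mem_biUnion.mpr ⟨j', Finset.mem_univ j', h⟩))]
        rw [this, zero_smul])]
      rw [Finset.sum_biUnion (fun x _ y _ hxy => hdisj x y hxy)]
      rw [← hc]
      apply Finset.sum_congr rfl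
      intro j' _
      rw [hw, Finset.smul_sum]
      exact Finset.sum_congr rfl (fun t ht => by rw [hgj j' t ht])
    have hsub : ∑ t ∈ Finset.univ.erase (0 : Fin n), g t • e t
        = ∑ i : {i : Fin n // i ≠ 0}, g i.1 • e i.1 := by
      apply Finset.sum_subtype
      intro x
      simp [Finset.mem_erase]
    have hzero := Fintype.linearIndependent_iff.mp hli (fun i => g i.1)
      (by rw [← hsub]; exact hsum)
    obtain ⟨t, ht⟩ := Finset.card_pos.mp (by rw [hcard j]; exact hk)
    have ht0 : t ≠ 0 := fun h => h0a j (h ▸ ht)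
    rw [← hgj j t ht]
    exact hzero ⟨t, ht0⟩
  -- main independence
  have hvind : LinearIndependent F (fun i : Fin s => pVec e (a i ∪ d)) := by
    rw [Fintype.linearIndependent_iff]
    intro c hc i
    set C : F := ∑ i, c i with hC
    have hc' : ∑ j, (C - c j) • w j = 0 := by
      have : ∑ j, (C - c j) • w j = C • (∑ j, w j) - ∑ j, c j • w j := by
        rw [Finset.smul_sum, ← Finset.sum_sub_distrib]
        exact Finset.sum_congr rfl (fun j _ => by rw [sub_smul])
      rw [this]
      have h2 : ∑ i, c i • pVec e (a i ∪ d) = C • (∑ j, w j) - ∑ j, c j • w j := by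
        simp only [hv, smul_sub]
        rw [Finset.sum_sub_distrib, ← Finset.sum_smul]
      rw [← h2, hc]
    have hcC : ∀ j, c j = C := by
      intro j
      exact (sub_eq_zero.mp (hwind _ hc' j)).symm
    have hCs : C = (s : F) * C := by
      calc C = ∑ j : Fin s, c j := hC
        _ = ∑ j : Fin s, C := Finset.sum_congr rfl (fun j _ => hcC j)
        _ = (s : F) * C := by rw [Finset.sum_const, Finset.card_univ,
              Fintype.card_fin, nsmul_eq_mul]
    have hC0 : C = 0 := by
      have h1 : ((s : F) - 1) * C = 0 := by
        rw [sub_mul, one_mul, ← hCs, sub_self]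
      have h2 : ((s - 1 : ℕ) : F) = (s : F) - 1 := by
        rw [Nat.cast_sub hs, Nat.cast_one]
      rw [← h2] at h1
      exact (mul_eq_zero.mp h1).resolve_left hchar
    rw [hcC i, hC0]
  exact ⟨hvind, by rw [finrank_span_eq_card hvind, Fintype.card_fin]⟩
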